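/- Let g be a binary quasigroup on Σ, and define the binary quasigroup g⁻ by g(x,y) = z ⟺ g⁻(z,y) = x. If {c,d} × {e,f} is an ab-component of g (with a ≠ b, c ≠ d, e ≠ f), then {a,b} × {e,f} is a cd-component of g⁻. -/
import Mathlib


/-- A binary quasigroup on `S`: bijective in each argument when the other is fixed. -/
def IsQuasigroupOp {S : Type*} (q : S → S → S) : Prop :=
  (∀ a : S, Function.Bijective (q a)) ∧ (∀ b : S, Function.Bijective fun a => q a b)

/-- The function obtained from a binary quasigroup `g` by interchanging the values
`a` and `b` on `Θ ⊆ S²` and leaving `g` unchanged elsewhere. -/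
noncomputable def switchFun2 {S : Type*} (g : S → S → S) (a b : S)
    (Θ : Set (S × S)) : S → S → S := fun x y =>
  haveI := Classical.dec ((x, y) ∈ Θ)
  haveI := Classical.decEq S
  if (x, y) ∈ Θ then (if g x y = a then b else if g x y = b then a else g x y)
  else g x y

/-- `Θ ⊆ S²` is an `ab`-component (switching component) of a binary quasigroup `g`. -/
def IsSwitchingComponent2 {S : Type*} (g : S → S → S) (a b : S)
    (Θ : Set (S × S)) : Prop :=
  Θ.Nonempty ∧ ((fun p : S × S => g p.1 p.2) '' Θ = {a, b}) ∧
    IsQuasigroupOp (switchFun2 g a b Θ)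

/-- If `h (q x y) y = x` for a quasigroup `q`, then `h` is a quasigroup. -/
lemma quasi_of_inv {S : Type*} (q h : S → S → S) (hq : IsQuasigroupOp q)
    (hh : ∀ x y, h (q x y) y = x) : IsQuasigroupOp h := by
  have hiff : ∀ x y z, q x y = z ↔ h z y = x := by
    intro x y z
    constructor
    · rintro rfl; exact hh x y
    · intro hx
      obtain ⟨x', hx'⟩ := (hq.2 y).2 z
      have hx'' : q x' y = z := hx'
      have h2 := hh x' y
      rw [hx''] at h2
      rw [h2] at hx
      rw [← hx]; exact hx''
  constructor
  · intro z
    constructor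
    · intro y1 y2 hy
      have h1 : q (h z y1) y1 = z := (hiff _ y1 z).mpr rfl
      have h2 : q (h z y2) y2 = z := (hiff _ y2 z).mpr rfl
      rw [hy] at h1
      exact (hq.1 (h z y2)).1 (h1.trans h2.symm)
    · intro x
      obtain ⟨y, hy⟩ := (hq.1 x).2 z
      exact ⟨y, (hiff x y z).mp hy⟩
  · intro y
    constructor
    · intro z1 z2 hz
      have hz' : h z1 y = h z2 y := hz
      have h1 : q (h z1 y) y = z1 := (hiff _ y z1).mpr rfl
      have h2 : q (h z2 y) y = z2 := (hiff _ y z2).mpr rfl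
      rw [hz'] at h1
      exact h1.symm.trans h2
    · intro x
      exact ⟨q x y, hh x y⟩

theorem inverse_component {S : Type*} (g ginv : S → S → S)
    (hg : IsQuasigroupOp g)
    (hinv : ∀ x y z : S, g x y = z ↔ ginv z y = x)
    (a b c d e f : S) (hab : a ≠ b) (hcd : c ≠ d) (hef : e ≠ f)
    (hcomp : IsSwitchingComponent2 g a b (({c, d} : Set S) ×ˢ ({e, f} : Set S))) :
    IsSwitchingComponent2 ginv c d (({a, b} : Set S) ×ˢ ({e, f} : Set S)) := by
  classical
  obtain ⟨hne, hImg, hq'⟩ := hcomp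
  set Θ : Set (S × S) := (({c, d} : Set S) ×ˢ ({e, f} : Set S)) with hΘ
  set Θ' : Set (S × S) := (({a, b} : Set S) ×ˢ ({e, f} : Set S)) with hΘ'
  have memΘ : ∀ x y : S, (x, y) ∈ Θ ↔ (x = c ∨ x = d) ∧ (y = e ∨ y = f) := by
    intro x y; simp [hΘ, Set.mem_prod]
  have memΘ' : ∀ z y : S, (z, y) ∈ Θ' ↔ (z = a ∨ z = b) ∧ (y = e ∨ y = f) := by
    intro z y; simp [hΘ', Set.mem_prod]
  have F1 : ∀ x y, (x = c ∨ x = d) → (y = e ∨ y = f) → g x y = a ∨ g x y = b := by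
    intro x y hx hy
    have hmem : g x y ∈ ({a, b} : Set S) := by
      rw [← hImg]; exact ⟨(x, y), (memΘ x y).mpr ⟨hx, hy⟩, rfl⟩
    simpa using hmem
  have colne : ∀ y, g c y ≠ g d y := fun y hh => hcd ((hg.2 y).1 hh)
  have ginv_eq : ∀ x y, ginv (g x y) y = x := fun x y => (hinv x y (g x y)).mp rfl
  have F3 : ∀ y, (y = e ∨ y = f) → ∀ z, (z = a ∨ z = b) → z = g c y ∨ z = g d y := by
    intro y hy z hz
    have h1 := F1 c y (Or.inl rfl) hy
    have h2 := F1 d y (Or.inr rfl) hy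
    have h3 := colne y
    rcases h1 with h1 | h1 <;> rcases h2 with h2 | h2
    · exact absurd (h1.trans h2.symm) h3
    · rcases hz with hz | hz
      · exact Or.inl (hz.trans h1.symm)
      · exact Or.inr (hz.trans h2.symm)
    · rcases hz with hz | hz
      · exact Or.inr (hz.trans h2.symm)
      · exact Or.inl (hz.trans h1.symm)
    · exact absurd (h1.trans h2.symm) h3
  have hE : ∀ x y, switchFun2 ginv c d Θ' (switchFun2 g a b Θ x y) y = x := by
    intro x y
    by_cases hy : y = e ∨ y = f
    · by_cases hx : x = c ∨ x = d
      · rcases hx with hx1 | hx1 <;> rw [hx1]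
        · have hmΘ : (c, y) ∈ Θ := (memΘ c y).mpr ⟨Or.inl rfl, hy⟩
          rcases F1 c y (Or.inl rfl) hy with h1 | h1
          · have h2 : g d y = b := by
              rcases F1 d y (Or.inr rfl) hy with h | h
              · exact absurd (h1.trans h.symm) (colne y)
              · exact h
            have e1 : switchFun2 g a b Θ c y = b := by
              simp [switchFun2, hmΘ, h1]
            rw [e1]
            have e2 : ginv b y = d := by rw [← h2]; exact ginv_eq d y
            have m2 : (b, y) ∈ Θ' := (memΘ' b y).mpr ⟨Or.inr rfl, hy⟩
            simp [switchFun2, m2, e2, Ne.symm hcd]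
          · have e1 : switchFun2 g a b Θ c y = a := by
              simp [switchFun2, hmΘ, h1, Ne.symm hab]
            rw [e1]
            have h2 : g d y = a := by
              rcases F1 d y (Or.inr rfl) hy with h | h
              · exact h
              · exact absurd (h1.trans h.symm) (colne y)
            have e2 : ginv a y = d := by rw [← h2]; exact ginv_eq d y
            have m2 : (a, y) ∈ Θ' := (memΘ' a y).mpr ⟨Or.inl rfl, hy⟩
            simp [switchFun2, m2, e2, Ne.symm hcd]
        · have hmΘ : (d, y) ∈ Θ := (memΘ d y).mpr ⟨Or.inr rfl, hy⟩
          rcases F1 d y (Or.inr rfl) hy with h1 | h1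
          · have h2 : g c y = b := by
              rcases F1 c y (Or.inl rfl) hy with h | h
              · exact absurd (h.trans h1.symm) (colne y)
              · exact h
            have e1 : switchFun2 g a b Θ d y = b := by
              simp [switchFun2, hmΘ, h1]
            rw [e1]
            have e2 : ginv b y = c := by rw [← h2]; exact ginv_eq c y
            have m2 : (b, y) ∈ Θ' := (memΘ' b y).mpr ⟨Or.inr rfl, hy⟩
            simp [switchFun2, m2, e2]
          · have e1 : switchFun2 g a b Θ d y = a := by
              simp [switchFun2, hmΘ, h1, Ne.symm hab]
            rw [e1]
            have h2 : g c y = a := by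
              rcases F1 c y (Or.inl rfl) hy with h | h
              · exact h
              · exact absurd (h.trans h1.symm) (colne y)
            have e2 : ginv a y = c := by rw [← h2]; exact ginv_eq c y
            have m2 : (a, y) ∈ Θ' := (memΘ' a y).mpr ⟨Or.inl rfl, hy⟩
            simp [switchFun2, m2, e2]
      · have h1 : (x, y) ∉ Θ := fun hm => hx ((memΘ x y).mp hm).1
        have e1 : switchFun2 g a b Θ x y = g x y := by simp [switchFun2, h1]
        rw [e1]
        have hz : ¬(g x y = a ∨ g x y = b) := by
          rintro (hzz | hzz)
          · rcases F3 y hy a (Or.inl rfl) with h | h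
            · exact hx (Or.inl (by rw [← ginv_eq c y, ← h, ← hzz, ginv_eq]))
            · exact hx (Or.inr (by rw [← ginv_eq d y, ← h, ← hzz, ginv_eq]))
          · rcases F3 y hy b (Or.inr rfl) with h | h
            · exact hx (Or.inl (by rw [← ginv_eq c y, ← h, ← hzz, ginv_eq]))
            · exact hx (Or.inr (by rw [← ginv_eq d y, ← h, ← hzz, ginv_eq]))
        have h2 : (g x y, y) ∉ Θ' := fun hm => hz ((memΘ' _ _).mp hm).1
        simp [switchFun2, h2, ginv_eq]
    · have h1 : (x, y) ∉ Θ := fun hm => hy ((memΘ x y).mp hm).2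
      have e1 : switchFun2 g a b Θ x y = g x y := by simp [switchFun2, h1]
      rw [e1]
      have h2 : (g x y, y) ∉ Θ' := fun hm => hy ((memΘ' _ _).mp hm).2
      simp [switchFun2, h2, ginv_eq]
  refine ⟨⟨(a, e), (memΘ' a e).mpr ⟨Or.inl rfl, Or.inl rfl⟩⟩, ?_, ?_⟩
  · apply Set.Subset.antisymm
    · rintro w ⟨⟨z, y⟩, hm, rfl⟩
      obtain ⟨hz, hy⟩ := (memΘ' z y).mp hm
      rcases F3 y hy z hz with h | h
      · show ginv z y ∈ ({c, d} : Set S)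
        rw [h, ginv_eq c y]; exact Set.mem_insert _ _
      · show ginv z y ∈ ({c, d} : Set S)
        rw [h, ginv_eq d y]; exact Set.mem_insert_of_mem _ rfl
    · rintro w hw
      simp only [Set.mem_insert_iff, Set.mem_singleton_iff] at hw
      rcases hw with hw | hw <;> rw [hw]
      · exact ⟨(g c e, e), (memΘ' _ _).mpr ⟨F1 c e (Or.inl rfl) (Or.inl rfl), Or.inl rfl⟩,
          ginv_eq c e⟩
      · exact ⟨(g d e, e), (memΘ' _ _).mpr ⟨F1 d e (Or.inr rfl) (Or.inl rfl), Or.inl rfl⟩,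
          ginv_eq d e⟩
  · exact quasi_of_inv _ _ hq' hE
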